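/- Let F ⊆ 2^ω × ω^ω be a closed set whose projection to the first coordinate is all of 2^ω. Let A₀ be the set of antichains of 2^{<ω}, and let B be the set of all infinite S ⊆ 2^{<ω} such that there exist f ∈ 2^ω with S ⊆ f' and g ∈ ω^ω with (f,g) ∈ F and g(k) ≤ Enum_f(S)(k) for all k (where f' = {f↾n : n ∈ ω} and Enum_f(S) enumerates {n : f↾n ∈ S} increasingly). Then the ideal 𝓙 on 2^{<ω} generated by A₀ ∪ B is a tall F_σ ideal: every infinite x ⊆ 2^{<ω} contains an infinite member of 𝓙, and 𝓙 is a countable union of closed subsets of 𝒫(2^{<ω}). -/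

import Mathlib

/-- An ideal on a countable set `α` (subsets identified with characteristic functions):
closed under unions and subsets, contains all finite sets, does not contain the whole set. -/
def IsIdealOn {α : Type*} (I : Set (α → Bool)) : Prop :=
  (∀ x y : α → Bool, x ∈ I → y ∈ I → (fun n => x n || y n) ∈ I) ∧
  (∀ x y : α → Bool, y ∈ I → (∀ n, x n = true → y n = true) → x ∈ I) ∧
  (∀ x : α → Bool, {n | x n = true}.Finite → x ∈ I) ∧
  (fun _ => true) ∉ I

/-- A family `H` of subsets of `α` is tall if every infinite subset of `α`
contains an infinite member of `H`. -/
def IsTall {α : Type*} (H : Set (α → Bool)) : Prop :=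
  ∀ x : α → Bool, {n | x n = true}.Infinite →
    ∃ y ∈ H, {n | y n = true}.Infinite ∧ ∀ n, y n = true → x n = true

/-- A set is `F_σ` if it is a countable union of closed sets. -/
def IsFsigma {X : Type*} [TopologicalSpace X] (S : Set X) : Prop :=
  ∃ C : ℕ → Set X, (∀ n, IsClosed (C n)) ∧ S = ⋃ n, C n

/-- The ideal generated by a family `G` of subsets of `α`: all sets covered by a
finite set together with finitely many members of `G`. -/
def genIdeal {α : Type*} (G : Set (α → Bool)) : Set (α → Bool) :=
  {x | ∃ t : Set α, t.Finite ∧ ∃ s : Finset (α → Bool), ↑s ⊆ G ∧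
    ∀ a, x a = true → a ∈ t ∨ ∃ y ∈ s, y a = true}

/-- `seg f n` is the restriction `f↾n` of `f : 2^ω` to its first `n` values,
an element of `2^{<ω}` (finite binary sequences coded as `List Bool`). -/
def seg (f : ℕ → Bool) (n : ℕ) : List Bool := List.ofFn (fun i : Fin n => f i)

/-- `A0` is the set of (characteristic functions of) antichains of `2^{<ω}`. -/
def A0 : Set (List Bool → Bool) :=
  {S | ∀ a b : List Bool, S a = true → S b = true → a <+: b → a = b}

/-- `Bset F` is the collection of infinite `S ⊆ 2^{<ω}` such that `S ⊆ f'` for some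
`f ∈ 2^ω` and some `g` with `(f,g) ∈ F` satisfies `g ≤ Enum_f(S)` pointwise, where
`Enum_f(S)` is the increasing enumeration of `{n : f↾n ∈ S}` (given by `Nat.nth`). -/
def Bset (F : Set ((ℕ → Bool) × (ℕ → ℕ))) : Set (List Bool → Bool) :=
  {S | {l | S l = true}.Infinite ∧ ∃ f : ℕ → Bool,
    (∀ l, S l = true → ∃ n, l = seg f n) ∧
    ∃ g : ℕ → ℕ, (f, g) ∈ F ∧ ∀ k, g k ≤ Nat.nth (fun n => S (seg f n) = true) k}

section AuxTallFsigma

lemma seg_length (f : ℕ → Bool) (n : ℕ) : (seg f n).length = n := by simp [seg]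

lemma seg_getElem (f : ℕ → Bool) (n i : ℕ) (h : i < (seg f n).length) :
    (seg f n)[i] = f i := by simp [seg]

lemma seg_getD (f : ℕ → Bool) (n i : ℕ) (h : i < n) :
    (seg f n).getD i false = f i := by
  rw [List.getD_eq_getElem _ _ (by simpa [seg_length] using h), seg_getElem]

lemma seg_injective (f : ℕ → Bool) : Function.Injective (seg f) := by
  intro m n h
  have := congrArg List.length h
  simpa [seg_length] using this

lemma seg_prefix (f : ℕ → Bool) {m n : ℕ} (h : m ≤ n) : seg f m <+: seg f n := by
  rw [List.prefix_iff_eq_take]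
  apply List.ext_getElem
  · simp [seg_length]; omega
  · intro i h1 h2
    simp only [List.getElem_take, seg_getElem]

lemma eq_seg_iff (f : ℕ → Bool) (l : List Bool) :
    l = seg f l.length ↔ ∀ i, i < l.length → l.getD i false = f i := by
  constructor
  · intro h i hi
    rw [h]
    exact seg_getD _ _ _ hi
  · intro h
    apply List.ext_getElem
    · simp [seg_length]
    · intro i h1 h2
      rw [seg_getElem]
      rw [← h i h1, List.getD_eq_getElem _ _ h1]

variable {α : Type*}

lemma mem_genIdeal_of_mem {G : Set (α → Bool)} {x : α → Bool} (h : x ∈ G) :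
    x ∈ genIdeal G :=
  ⟨∅, Set.finite_empty, {x}, by simpa using h, fun a ha => Or.inr ⟨x, by simp, ha⟩⟩

lemma finite_mem_genIdeal {G : Set (α → Bool)} {x : α → Bool}
    (h : {n | x n = true}.Finite) : x ∈ genIdeal G :=
  ⟨{n | x n = true}, h, ∅, by simp, fun a ha => Or.inl ha⟩

lemma genIdeal_union {G : Set (α → Bool)} {x y : α → Bool}
    (hx : x ∈ genIdeal G) (hy : y ∈ genIdeal G) :
    (fun n => x n || y n) ∈ genIdeal G := by
  classical
  obtain ⟨t1, ht1, s1, hs1, h1⟩ := hx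
  obtain ⟨t2, ht2, s2, hs2, h2⟩ := hy
  refine ⟨t1 ∪ t2, ht1.union ht2, s1 ∪ s2, ?_, ?_⟩
  · rw [Finset.coe_union]; exact Set.union_subset hs1 hs2
  · intro a ha
    rcases Bool.or_eq_true_iff.mp ha with h | h
    · rcases h1 a h with h' | ⟨z, hz, hza⟩
      · exact Or.inl (Or.inl h')
      · exact Or.inr ⟨z, Finset.mem_union_left _ hz, hza⟩
    · rcases h2 a h with h' | ⟨z, hz, hza⟩
      · exact Or.inl (Or.inr h')
      · exact Or.inr ⟨z, Finset.mem_union_right _ hz, hza⟩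

lemma genIdeal_downward {G : Set (α → Bool)} {x y : α → Bool}
    (hy : y ∈ genIdeal G) (hxy : ∀ n, x n = true → y n = true) :
    x ∈ genIdeal G := by
  obtain ⟨t, ht, s, hs, h⟩ := hy
  exact ⟨t, ht, s, hs, fun a ha => h a (hxy a ha)⟩

lemma exists_cover_of_subset_genIdeal {G : Set (α → Bool)} (s : Finset (α → Bool)) :
    ↑s ⊆ genIdeal G →
    ∃ T : Set α, T.Finite ∧ ∃ S : Finset (α → Bool), ↑S ⊆ G ∧
      ∀ a, (∃ y ∈ s, y a = true) → a ∈ T ∨ ∃ z ∈ S, z a = true := by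
  classical
  induction s using Finset.induction_on with
  | empty => exact fun _ => ⟨∅, Set.finite_empty, ∅, by simp, by simp⟩
  | @insert y s hys ih =>
    intro hs
    have hy : y ∈ genIdeal G := hs (by simp)
    obtain ⟨ty, hty, sy, hsy, hcy⟩ := hy
    obtain ⟨T, hT, S, hS, hc⟩ := ih (fun z hz => hs (by simp; right; exact_mod_cast hz))
    refine ⟨T ∪ ty, hT.union hty, S ∪ sy, ?_, ?_⟩
    · rw [Finset.coe_union]; exact Set.union_subset hS hsy
    · rintro a ⟨z, hz, hza⟩
      rcases Finset.mem_insert.mp hz with rfl | hz'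
      · rcases hcy a hza with h' | ⟨w, hw, hwa⟩
        · exact Or.inl (Or.inr h')
        · exact Or.inr ⟨w, Finset.mem_union_right _ hw, hwa⟩
      · rcases hc a ⟨z, hz', hza⟩ with h' | ⟨w, hw, hwa⟩
        · exact Or.inl (Or.inl h')
        · exact Or.inr ⟨w, Finset.mem_union_left _ hw, hwa⟩

lemma genIdeal_trans {G K : Set (α → Bool)} (hK : K ⊆ genIdeal G) :
    genIdeal K ⊆ genIdeal G := by
  rintro x ⟨t, ht, s, hs, hcov⟩
  obtain ⟨T, hT, S, hS, hc⟩ :=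
    exists_cover_of_subset_genIdeal s (fun y hy => hK (hs hy))
  refine ⟨t ∪ T, ht.union hT, S, hS, fun a ha => ?_⟩
  rcases hcov a ha with h | h
  · exact Or.inl (Or.inl h)
  · rcases hc a h with h' | h'
    · exact Or.inl (Or.inr h')
    · exact Or.inr h'

lemma infinite_funs : Infinite (ℕ → Bool) := by
  apply Infinite.of_injective (fun n : ℕ => fun i : ℕ => decide (i < n))
  intro m n h
  by_contra hne
  rcases Nat.lt_or_ge m n with hlt | hge
  · have := congrFun h m; simp [hlt] at this
  · have hlt : n < m := lt_of_le_of_ne hge (Ne.symm hne)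
    have := congrFun h n; simp [hlt] at this

lemma top_not_mem (F : Set ((ℕ → Bool) × (ℕ → ℕ))) :
    (fun _ => true) ∉ genIdeal (A0 ∪ Bset F) := by
  classical
  rintro ⟨t, ht, s, hs, hcov⟩
  -- witness branches of the Bset members
  haveI := infinite_funs
  set w : (List Bool → Bool) → (ℕ → Bool) :=
    fun y => if h : y ∈ Bset F then h.2.choose else (fun _ => false) with hw
  have hwspec : ∀ y, y ∈ Bset F → ∀ l, y l = true → ∃ n, l = seg (w y) n := by
    intro y hy l hl
    rw [hw]; simp only [dif_pos hy]
    exact hy.2.choose_spec.1 l hl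
  have hWfin : (w '' ↑s).Finite := (s.finite_toSet.image w)
  obtain ⟨f, hf⟩ := hWfin.infinite_compl.nonempty
  -- ℕ is covered by finitely many finite sets
  have hcover : (Set.univ : Set ℕ) ⊆
      {n | seg f n ∈ t} ∪ ⋃ y ∈ s, {n | y (seg f n) = true} := by
    intro n _
    rcases hcov (seg f n) rfl with h | ⟨y, hy, hya⟩
    · exact Or.inl h
    · exact Or.inr (Set.mem_biUnion hy hya)
  have hfin : ({n | seg f n ∈ t} ∪ ⋃ y ∈ s, {n | y (seg f n) = true}).Finite := by
    apply Set.Finite.union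
    · exact Set.Finite.preimage (Set.injOn_of_injective (seg_injective f)) ht
    · apply Set.Finite.biUnion s.finite_toSet
      intro y hy
      rcases hs hy with hA | hB
      · -- antichain: at most one point on a branch
        apply Set.Subsingleton.finite
        intro m hm n hn
        rcases Nat.le_total m n with hmn | hnm
        · exact seg_injective f (hA _ _ hm hn (seg_prefix f hmn)) ▸ rfl
        · exact (seg_injective f (hA _ _ hn hm (seg_prefix f hnm))).symm ▸ rfl
      · -- Bset member: lives on a different branch
        have hne : w y ≠ f := by
          intro hEq
          exact hf ⟨y, hy, hEq⟩
        have hex : ∃ d, f d ≠ w y d := by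
          by_contra hc
          push_neg at hc
          exact hne (funext fun d => (hc d).symm)
        obtain ⟨d, hd⟩ := hex
        apply Set.Finite.subset (Set.finite_Iic d)
        intro n hn
        simp only [Set.mem_setOf_eq] at hn
        obtain ⟨m, hm⟩ := hwspec y hB _ hn
        have hmn : m = n := by
          have := congrArg List.length hm
          simpa [seg_length] using this.symm
        subst hmn
        -- seg f m = seg (w y) m, so f and w y agree below m
        by_contra hnd
        have hdm : d < m := by simpa [Set.mem_Iic, not_le] using hnd
        have : (seg f m).getD d false = (seg (w y) m).getD d false := by rw [← hm]
        rw [List.getD_eq_getElem _ _ (by simpa [seg_length] using hdm),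
            List.getD_eq_getElem _ _ (by simpa [seg_length] using hdm)] at this
        simp only [seg] at this
        simp only [List.getElem_ofFn] at this
        exact hd (by simpa using this)
  exact Set.infinite_univ (Set.Finite.subset hfin hcover)

lemma nat_no_strictAnti (f : ℕ → ℕ) (hf : StrictAnti f) : False := by
  have h : ∀ n, f n + n ≤ f 0 := by
    intro n
    induction n with
    | zero => simp
    | succ n ih =>
      have h2 : f (n + 1) < f n := hf (by omega)
      omega
  have := h (f 0 + 1)
  omega

lemma chain_branch (c : ℕ → List Bool) (hinj : Function.Injective c)
    (hchain : ∀ m n, m < n → c m <+: c n) :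
    ∃ f : ℕ → Bool, (∀ n, c n = seg f (c n).length) ∧
      StrictMono (fun n => (c n).length) := by
  have hlen : StrictMono (fun n => (c n).length) := by
    intro m n hmn
    have hpre := hchain m n hmn
    have hle := hpre.length_le
    rcases lt_or_eq_of_le hle with h | h
    · exact h
    · exact absurd (hinj (hpre.eq_of_length h)) (Nat.ne_of_lt hmn)
  have hlb : ∀ i, i < (c (i + 1)).length := fun i =>
    lt_of_lt_of_le (Nat.lt_succ_self i) hlen.le_apply
  refine ⟨fun i => (c (i + 1)).getD i false, ?_, hlen⟩
  intro n
  apply List.ext_getElem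
  · simp [seg_length]
  · intro i h1 h2
    rw [seg_getElem]
    rw [List.getD_eq_getElem _ _ (hlb i)]
    rcases Nat.lt_trichotomy n (i + 1) with h | h | h
    · exact (hchain n (i + 1) h).getElem h1
    · subst h; rfl
    · exact ((hchain (i + 1) n h).getElem (hlb i)).symm

lemma nth_range_strictMono (m : ℕ → ℕ) (hm : StrictMono m) (k : ℕ) :
    Nat.nth (fun n => ∃ j, n = m j) k = m k := by
  classical
  have hp : (fun n => ∃ j, n = m j) (m k) := ⟨k, rfl⟩
  have hc : Nat.count (fun n => ∃ j, n = m j) (m k) = k := by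
    rw [Nat.count_eq_card_filter_range]
    have himg : (Finset.range (m k)).filter (fun n => ∃ j, n = m j)
        = (Finset.range k).image m := by
      ext n
      simp only [Finset.mem_filter, Finset.mem_range, Finset.mem_image]
      constructor
      · rintro ⟨hn, j, rfl⟩
        exact ⟨j, hm.lt_iff_lt.mp hn, rfl⟩
      · rintro ⟨j, hj, rfl⟩
        exact ⟨hm hj, j, rfl⟩
    rw [himg]
    rw [Finset.card_image_of_injective _ hm.injective, Finset.card_range]
  have := Nat.nth_count (p := fun n => ∃ j, n = m j) hp
  rwa [hc] at this

/-- From an injective sequence in `2^{<ω}`, extract an injective subsequence that is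
either a chain or an antichain. -/
lemma chain_or_antichain (c0 : ℕ → List Bool) (hinj : Function.Injective c0) :
    ∃ c : ℕ → ℕ, StrictMono c ∧
      ((∀ m n, m < n → c0 (c m) <+: c0 (c n)) ∨
       (∀ m n, m ≠ n → ¬ c0 (c m) <+: c0 (c n))) := by
  haveI : IsTrans (List Bool) (· <+: ·) := ⟨fun a b c hab hbc => hab.trans hbc⟩
  haveI : IsTrans (List Bool) (fun a b => b <+: a) := ⟨fun a b c hab hbc => hbc.trans hab⟩
  obtain ⟨φ, hφ⟩ := exists_increasing_or_nonincreasing_subseq (· <+: ·) c0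
  rcases hφ with hchain | hanti
  · exact ⟨φ, φ.strictMono, Or.inl hchain⟩
  · obtain ⟨ψ, hψ⟩ := exists_increasing_or_nonincreasing_subseq
      (fun a b => b <+: a) (fun n => c0 (φ n))
    rcases hψ with hdesc | hanti2
    · exfalso
      apply nat_no_strictAnti (fun n => (c0 (φ (ψ n))).length)
      intro m n hmn
      have hpre := hdesc m n hmn
      have hle := hpre.length_le
      rcases lt_or_eq_of_le hle with h | h
      · exact h
      · have : n = m := ψ.injective (φ.injective (hinj (hpre.eq_of_length h)))
        omega
    · refine ⟨fun n => φ (ψ n), (φ.strictMono.comp ψ.strictMono), Or.inr ?_⟩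
      intro m n hmn hpre
      rcases Nat.lt_or_ge m n with h | h
      · exact hanti (ψ m) (ψ n) (ψ.strictMono h) hpre
      · have h' : n < m := lt_of_le_of_ne h (Ne.symm hmn)
        exact hanti2 n m h' hpre

lemma tall_main (F : Set ((ℕ → Bool) × (ℕ → ℕ)))
    (hproj : ∀ f : ℕ → Bool, ∃ g : ℕ → ℕ, (f, g) ∈ F) :
    IsTall (genIdeal (A0 ∪ Bset F)) := by
  classical
  intro x hx
  set e := hx.natEmbedding with he
  set c0 : ℕ → List Bool := fun n => (e n : List Bool) with hc0
  have hc0x : ∀ n, x (c0 n) = true := fun n => (e n).2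
  have hc0inj : Function.Injective c0 := fun m n h => e.injective (Subtype.ext h)
  obtain ⟨φ, hφmono, hcase⟩ := chain_or_antichain c0 hc0inj
  set c : ℕ → List Bool := fun n => c0 (φ n) with hc
  have hcinj : Function.Injective c := hc0inj.comp hφmono.injective
  have hcx : ∀ n, x (c n) = true := fun n => hc0x (φ n)
  rcases hcase with hchain | hanti
  · -- chain case
    obtain ⟨f, hseg, hlen⟩ := chain_branch c hcinj hchain
    obtain ⟨g, hg⟩ := hproj f
    set T : ℕ → ℕ := fun k => (Finset.range (k + 1)).sup g + k with hT
    have hTmono : StrictMono T := by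
      intro a b hab
      have : (Finset.range (a + 1)).sup g ≤ (Finset.range (b + 1)).sup g :=
        Finset.sup_mono (Finset.range_subset_range.mpr (by omega))
      simp only [hT]; omega
    set m : ℕ → ℕ := fun k => (c (T k)).length with hm
    have hmmono : StrictMono m := hlen.comp hTmono
    have hgm : ∀ k, g k ≤ m k := by
      intro k
      have h1 : g k ≤ (Finset.range (k + 1)).sup g :=
        Finset.le_sup (Finset.mem_range.mpr (by omega))
      have h2 : T k ≤ m k := hlen.le_apply
      simp only [hT] at h2 ⊢
      omega
    set y : List Bool → Bool := fun l => decide (∃ k, l = seg f (m k)) with hy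
    have hymem : ∀ l, y l = true ↔ ∃ k, l = seg f (m k) := by
      intro l; simp [hy]
    have hyinf : {l | y l = true}.Infinite := by
      have : {l | y l = true} = Set.range (fun k => seg f (m k)) := by
        ext l; simp [hymem, Set.mem_range, eq_comm]
      rw [this]
      exact Set.infinite_range_of_injective ((seg_injective f).comp hmmono.injective)
    have hysegc : ∀ k, seg f (m k) = c (T k) := by
      intro k; exact (hseg (T k)).symm
    have hyx : ∀ l, y l = true → x l = true := by
      intro l hl
      obtain ⟨k, rfl⟩ := (hymem l).mp hl
      rw [hysegc k]; exact hcx (T k)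
    refine ⟨y, ?_, hyinf, hyx⟩
    apply mem_genIdeal_of_mem
    right
    refine ⟨hyinf, f, ?_, g, hg, ?_⟩
    · intro l hl
      obtain ⟨k, rfl⟩ := (hymem l).mp hl
      exact ⟨m k, rfl⟩
    · intro k
      have hP : (fun n => y (seg f n) = true) = (fun n => ∃ j, n = m j) := by
        funext n
        apply propext
        rw [hymem]
        constructor
        · rintro ⟨j, hj⟩; exact ⟨j, seg_injective f hj⟩
        · rintro ⟨j, rfl⟩; exact ⟨j, rfl⟩
      rw [hP, nth_range_strictMono m hmmono k]
      exact hgm k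
  · -- antichain case
    set y : List Bool → Bool := fun l => decide (∃ k, l = c k) with hy
    have hymem : ∀ l, y l = true ↔ ∃ k, l = c k := by intro l; simp [hy]
    have hyinf : {l | y l = true}.Infinite := by
      have : {l | y l = true} = Set.range c := by
        ext l; simp [hymem, Set.mem_range, eq_comm]
      rw [this]
      exact Set.infinite_range_of_injective hcinj
    refine ⟨y, ?_, hyinf, ?_⟩
    · apply mem_genIdeal_of_mem
      left
      intro a b ha hb hab
      obtain ⟨ka, rfl⟩ := (hymem a).mp ha
      obtain ⟨kb, rfl⟩ := (hymem b).mp hb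
      rcases eq_or_ne ka kb with rfl | hne
      · rfl
      · exact absurd hab (hanti ka kb hne)
    · intro l hl
      obtain ⟨k, rfl⟩ := (hymem l).mp hl
      exact hcx k

lemma isOpen_eval {X : Type*} (a : X) (b : Bool) :
    IsOpen {S : X → Bool | S a = b} := by
  have : {S : X → Bool | S a = b} = (fun S : X → Bool => S a) ⁻¹' {b} := by ext; simp
  rw [this]
  exact (continuous_apply a).isOpen_preimage _ (isOpen_discrete _)

lemma isClosed_eval {X : Type*} (a : X) (b : Bool) :
    IsClosed {S : X → Bool | S a = b} := by
  have : {S : X → Bool | S a = b} = (fun S : X → Bool => S a) ⁻¹' {b} := by ext; simp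
  rw [this]
  exact (isClosed_discrete _).preimage (continuous_apply a)

lemma isClosed_A0 : IsClosed A0 := by
  have : A0 = ⋂ (a : List Bool), ⋂ (b : List Bool),
      {S : List Bool → Bool | S a = true → S b = true → a <+: b → a = b} := by
    ext S; simp [A0]
  rw [this]
  apply isClosed_iInter; intro a
  apply isClosed_iInter; intro b
  by_cases h : a <+: b ∧ a ≠ b
  · have heq : {S : List Bool → Bool | S a = true → S b = true → a <+: b → a = b}
        = ({S : List Bool → Bool | S a = true} ∩ {S | S b = true})ᶜ := by
      ext S
      simp only [Set.mem_setOf_eq, Set.mem_compl_iff, Set.mem_inter_iff, not_and]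
      constructor
      · intro hS hSa hSb
        exact h.2 (hS hSa hSb h.1)
      · intro hS hSa hSb _
        exact absurd hSb (by simpa using hS hSa)
    rw [heq]
    exact IsOpen.isClosed_compl ((isOpen_eval a true).inter (isOpen_eval b true))
  · have heq : {S : List Bool → Bool | S a = true → S b = true → a <+: b → a = b}
        = Set.univ := by
      ext S
      simp only [Set.mem_setOf_eq, Set.mem_univ, iff_true]
      intro _ _ hab
      by_contra hne
      exact h ⟨hab, hne⟩
    rw [heq]; exact isClosed_univ

lemma isClosed_coverSet (K : Set (List Bool → Bool)) (hK : IsClosed K)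
    (t : Finset (List Bool)) (m : ℕ) :
    IsClosed {x : List Bool → Bool | ∃ y : Fin m → (List Bool → Bool),
      (∀ i, y i ∈ K) ∧ ∀ a, x a = true → a ∈ t ∨ ∃ i, y i a = true} := by
  set Q := (List Bool → Bool) × (Fin m → (List Bool → Bool)) with hQ
  set T1 : Set Q := ⋂ i, (fun q : Q => q.2 i) ⁻¹' K with hT1
  set T2 : Set Q := ⋂ (a : List Bool),
    (if a ∈ t then Set.univ else
      (Prod.fst ⁻¹' {S : List Bool → Bool | S a = true})ᶜ
        ∪ ⋃ i, (fun q : Q => q.2 i) ⁻¹' {S : List Bool → Bool | S a = true}) with hT2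
  have hT1closed : IsClosed T1 :=
    isClosed_iInter fun i => hK.preimage ((continuous_apply i).comp continuous_snd)
  have hT2closed : IsClosed T2 := by
    apply isClosed_iInter; intro a
    by_cases ha : a ∈ t
    · simp only [if_pos ha]; exact isClosed_univ
    · simp only [if_neg ha]
      apply IsClosed.union
      · exact IsOpen.isClosed_compl ((isOpen_eval a true).preimage continuous_fst)
      · exact isClosed_iUnion_of_finite fun i =>
          (isClosed_eval a true).preimage ((continuous_apply i).comp continuous_snd)
  have himg : {x : List Bool → Bool | ∃ y : Fin m → (List Bool → Bool),
      (∀ i, y i ∈ K) ∧ ∀ a, x a = true → a ∈ t ∨ ∃ i, y i a = true}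
      = Prod.fst '' (T1 ∩ T2) := by
    ext x
    simp only [Set.mem_setOf_eq, Set.mem_image, Set.mem_inter_iff, hT1, hT2,
      Set.mem_iInter, Set.mem_preimage, Prod.exists]
    constructor
    · rintro ⟨y, h1, h2⟩
      refine ⟨x, y, ⟨h1, ?_⟩, rfl⟩
      intro a
      by_cases ha : a ∈ t
      · simp [ha]
      · simp only [if_neg ha, Set.mem_union, Set.mem_compl_iff, Set.mem_preimage,
          Set.mem_setOf_eq, Set.mem_iUnion]
        by_cases hx : x a = true
        · rcases h2 a hx with h | h
          · exact absurd h ha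
          · exact Or.inr h
        · exact Or.inl hx
    · rintro ⟨x', y, ⟨h1, h2⟩, rfl⟩
      refine ⟨y, h1, ?_⟩
      intro a hx
      have := h2 a
      by_cases ha : a ∈ t
      · exact Or.inl ha
      · simp only [if_neg ha, Set.mem_union, Set.mem_compl_iff, Set.mem_preimage,
          Set.mem_setOf_eq, Set.mem_iUnion] at this
        rcases this with h | h
        · exact absurd hx h
        · exact Or.inr h
  rw [himg]
  exact (((hT1closed.inter hT2closed).isCompact).image continuous_fst).isClosed

lemma closure_agree {B : Set (List Bool → Bool)} {S : List Bool → Bool}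
    (hS : S ∈ closure B) (fs : Finset (List Bool)) :
    ∃ S' ∈ B, ∀ l ∈ fs, S' l = S l := by
  have hU : IsOpen {x : List Bool → Bool | ∀ l ∈ fs, x l = S l} := by
    have : {x : List Bool → Bool | ∀ l ∈ fs, x l = S l}
        = ⋂ l ∈ fs, {x : List Bool → Bool | x l = S l} := by
      ext x; simp
    rw [this]
    exact isOpen_biInter_finset fun l _ => isOpen_eval l (S l)
  obtain ⟨S', hS'U, hS'B⟩ := mem_closure_iff.mp hS _ hU (fun l _ => rfl)
  exact ⟨S', hS'B, hS'U⟩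

lemma closure_Bset_sub {F : Set ((ℕ → Bool) × (ℕ → ℕ))} (hF : IsClosed F)
    {S : List Bool → Bool} (hS : S ∈ closure (Bset F)) :
    {l | S l = true}.Finite ∨ S ∈ Bset F := by
  classical
  by_cases hfin : {l | S l = true}.Finite
  · exact Or.inl hfin
  right
  have hinf : {l | S l = true}.Infinite := hfin
  -- lengths are injective on S
  have hlen : ∀ l1 l2 : List Bool, S l1 = true → S l2 = true →
      l1.length = l2.length → l1 = l2 := by
    intro l1 l2 h1 h2 hl
    obtain ⟨S', hS'B, hagree⟩ := closure_agree hS {l1, l2}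
    obtain ⟨-, f', hf', -⟩ := hS'B
    have e1 : S' l1 = true := by rw [hagree l1 (by simp)]; exact h1
    have e2 : S' l2 = true := by rw [hagree l2 (by simp)]; exact h2
    obtain ⟨n1, hn1⟩ := hf' _ e1
    obtain ⟨n2, hn2⟩ := hf' _ e2
    have hne : n1 = n2 := by
      have e3 := congrArg List.length hn1
      have e4 := congrArg List.length hn2
      rw [seg_length] at e3 e4
      omega
    rw [hn1, hn2, hne]
  set N : ℕ → Prop := fun n => ∃ l, S l = true ∧ l.length = n with hN
  have hNinf : (setOf N).Infinite := by
    have himg : setOf N = List.length '' {l | S l = true} := by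
      ext n
      simp only [hN, Set.mem_setOf_eq, Set.mem_image]
      exact Iff.rfl
    rw [himg]
    exact Set.Infinite.image (fun l1 h1 l2 h2 h12 => hlen l1 l2 h1 h2 h12) hinf
  have hmono : StrictMono (Nat.nth N) := Nat.nth_strictMono hNinf
  have hmem : ∀ k, N (Nat.nth N k) := fun k => Nat.nth_mem_of_infinite hNinf k
  -- the approximating closed sets
  set E : ℕ → Set ((ℕ → Bool) × (ℕ → ℕ)) := fun m =>
    {p | p ∈ F ∧ (∀ l : List Bool, S l = true → l.length ≤ m → l = seg p.1 l.length) ∧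
      ∀ k ≤ m, p.2 k ≤ Nat.nth N k} with hE
  have hEdec : ∀ m, E (m + 1) ⊆ E m := by
    rintro m p ⟨h1, h2, h3⟩
    exact ⟨h1, fun l hl hm => h2 l hl (by omega), fun k hk => h3 k (by omega)⟩
  have hEclosed : ∀ m, IsClosed (E m) := by
    intro m
    have heq : E m = F ∩ ((⋂ (l : List Bool),
        {p : (ℕ → Bool) × (ℕ → ℕ) | S l = true → l.length ≤ m → l = seg p.1 l.length})
        ∩ ⋂ (k : ℕ), {p : (ℕ → Bool) × (ℕ → ℕ) | k ≤ m → p.2 k ≤ Nat.nth N k}) := by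
      ext p
      simp only [hE, Set.mem_setOf_eq, Set.mem_inter_iff, Set.mem_iInter]
    rw [heq]
    apply hF.inter
    apply IsClosed.inter
    · apply isClosed_iInter; intro l
      by_cases hc : S l = true ∧ l.length ≤ m
      · have heq2 : {p : (ℕ → Bool) × (ℕ → ℕ) | S l = true → l.length ≤ m → l = seg p.1 l.length}
            = ⋂ (i : ℕ), {p : (ℕ → Bool) × (ℕ → ℕ) |
                i < l.length → l.getD i false = p.1 i} := by
          ext p
          simp only [Set.mem_setOf_eq, Set.mem_iInter]
          constructor
          · intro h i hi
            exact ((eq_seg_iff p.1 l).mp (h hc.1 hc.2)) i hi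
          · intro h _ _
            exact (eq_seg_iff p.1 l).mpr (fun i hi => h i hi)
        rw [heq2]
        apply isClosed_iInter; intro i
        by_cases hi : i < l.length
        · have heq3 : {p : (ℕ → Bool) × (ℕ → ℕ) | i < l.length → l.getD i false = p.1 i}
              = (fun p : (ℕ → Bool) × (ℕ → ℕ) => p.1 i) ⁻¹' {l.getD i false} := by
            ext p; simp [hi, eq_comm]
          rw [heq3]
          exact (isClosed_discrete _).preimage ((continuous_apply i).comp continuous_fst)
        · have heq3 : {p : (ℕ → Bool) × (ℕ → ℕ) | i < l.length → l.getD i false = p.1 i}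
              = Set.univ := by
            ext p; simp [hi]
          rw [heq3]; exact isClosed_univ
      · have heq2 : {p : (ℕ → Bool) × (ℕ → ℕ) | S l = true → l.length ≤ m → l = seg p.1 l.length}
            = Set.univ := by
          ext p
          simp only [Set.mem_setOf_eq, Set.mem_univ, iff_true]
          intro h1 h2
          exact absurd ⟨h1, h2⟩ hc
        rw [heq2]; exact isClosed_univ
    · apply isClosed_iInter; intro k
      by_cases hk : k ≤ m
      · have heq2 : {p : (ℕ → Bool) × (ℕ → ℕ) | k ≤ m → p.2 k ≤ Nat.nth N k}
            = (fun p : (ℕ → Bool) × (ℕ → ℕ) => p.2 k) ⁻¹' (Set.Iic (Nat.nth N k)) := by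
          ext p; simp [hk]
        rw [heq2]
        exact (isClosed_discrete _).preimage ((continuous_apply k).comp continuous_snd)
      · have heq2 : {p : (ℕ → Bool) × (ℕ → ℕ) | k ≤ m → p.2 k ≤ Nat.nth N k}
            = Set.univ := by
          ext p; simp [hk]
        rw [heq2]; exact isClosed_univ
  -- nonemptiness
  have hEne : ∀ m, (E m).Nonempty := by
    intro m
    set M := max m (Nat.nth N m) with hM
    obtain ⟨S', hS'B, hagree⟩ := closure_agree hS (List.finite_length_le Bool M).toFinset
    obtain ⟨hS'inf, f', hf', g', hFg', hg'⟩ := hS'B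
    have hagree' : ∀ l : List Bool, l.length ≤ M → S' l = S l := by
      intro l hl
      exact hagree l ((List.finite_length_le Bool M).mem_toFinset.mpr hl)
    have hseg' : ∀ l : List Bool, S' l = true → l = seg f' l.length := by
      intro l hl
      obtain ⟨n, hn⟩ := hf' l hl
      have : l.length = n := by rw [hn, seg_length]
      rw [this]; exact hn
    refine ⟨(f', g'), hFg', ?_, ?_⟩
    · intro l hl hlm
      have hS'l : S' l = true := by
        rw [hagree' l (le_trans hlm (le_max_left _ _))]; exact hl
      exact hseg' l hS'l
    · intro k hk
      refine le_trans (hg' k) ?_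
      set N' : ℕ → Prop := fun n => S' (seg f' n) = true with hN'
      have hN'inf : (setOf N').Infinite := by
        have hsub : {l | S' l = true} ⊆ (fun n => seg f' n) '' setOf N' := by
          intro l hl
          refine ⟨l.length, ?_, (hseg' l hl).symm⟩
          simp only [hN', Set.mem_setOf_eq]
          show S' (seg f' l.length) = true
          rw [← hseg' l hl]; exact hl
        exact Set.Infinite.of_image _ (Set.Infinite.mono hsub hS'inf)
      -- the first k+1 elements of N are in N'
      have hel : ∀ j, j ≤ k → N' (Nat.nth N j) := by
        intro j hj
        obtain ⟨l, hl, hll⟩ := hmem j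
        have hlenM : l.length ≤ M := by
          rw [hll]
          exact le_trans (hmono.monotone (le_trans hj hk)) (le_max_right _ _)
        have hS'l : S' l = true := by rw [hagree' l hlenM]; exact hl
        have hsegl := hseg' l hS'l
        simp only [hN', Set.mem_setOf_eq]
        rw [← hll, ← hsegl]
        exact hS'l
      have hcnt : k < Nat.count N' (Nat.nth N k + 1) := by
        rw [Nat.count_eq_card_filter_range]
        have hsub2 : (Finset.range (k + 1)).image (Nat.nth N)
            ⊆ (Finset.range (Nat.nth N k + 1)).filter (fun n => N' n) := by
          intro n hn
          simp only [Finset.mem_image, Finset.mem_range] at hn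
          obtain ⟨j, hj, rfl⟩ := hn
          simp only [Finset.mem_filter, Finset.mem_range]
          exact ⟨Nat.lt_succ_of_le (hmono.monotone (by omega)),
            hel j (by omega)⟩
        have hcard := Finset.card_le_card hsub2
        rw [Finset.card_image_of_injective _ hmono.injective, Finset.card_range] at hcard
        omega
      have := Nat.nth_lt_of_lt_count (p := N') hcnt
      omega
  -- compactness
  choose P hP using hEne
  set b : ℕ → ℕ := fun k => max (Nat.nth N k)
    ((Finset.range (k + 1)).sup (fun j => (P j).2 k)) with hb
  set K0 : Set ((ℕ → Bool) × (ℕ → ℕ)) :=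
    Set.univ ×ˢ (Set.univ.pi fun k => Set.Iic (b k)) with hK0
  have hK0mem : ∀ m, P m ∈ K0 := by
    intro m
    simp only [hK0, Set.mem_prod, Set.mem_univ, true_and, Set.mem_pi, Set.mem_Iic]
    intro k _
    rcases Nat.le_total k m with hkm | hmk
    · exact le_trans ((hP m).2.2 k hkm) (le_max_left _ _)
    · exact le_trans (Finset.le_sup (f := fun j => (P j).2 k)
        (Finset.mem_range.mpr (by omega))) (le_max_right _ _)
  have hK0compact : IsCompact K0 := by
    apply IsCompact.prod
    · exact isCompact_univ
    · exact isCompact_univ_pi fun k => (Set.finite_Iic (b k)).isCompact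
  have hK0closed : IsClosed K0 := by
    apply IsClosed.prod isClosed_univ
    exact isClosed_set_pi fun k _ => isClosed_discrete _
  set D : ℕ → Set ((ℕ → Bool) × (ℕ → ℕ)) := fun m => E m ∩ K0 with hD
  have hDne : (⋂ m, D m).Nonempty := by
    apply IsCompact.nonempty_iInter_of_sequence_nonempty_isCompact_isClosed
    · intro n; exact Set.inter_subset_inter (hEdec n) (Set.Subset.refl _)
    · intro n; exact ⟨P n, hP n, hK0mem n⟩
    · exact hK0compact.of_isClosed_subset ((hEclosed 0).inter hK0closed)
        Set.inter_subset_right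
    · intro n; exact (hEclosed n).inter hK0closed
  obtain ⟨⟨f, g⟩, hfg⟩ := hDne
  have hfgE : ∀ m, (f, g) ∈ E m := fun m => (Set.mem_iInter.mp hfg m).1
  -- conclude
  refine ⟨hinf, f, ?_, g, (hfgE 0).1, ?_⟩
  · intro l hl
    exact ⟨l.length, (hfgE l.length).2.1 l hl le_rfl⟩
  · intro k
    have hNP : (fun n => S (seg f n) = true) = N := by
      funext n
      apply propext
      constructor
      · intro h
        exact ⟨seg f n, h, seg_length f n⟩
      · rintro ⟨l, hl, rfl⟩
        have := (hfgE l.length).2.1 l hl le_rfl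
        rw [← this]
        exact hl
    rw [hNP]
    exact (hfgE k).2.2 k le_rfl

lemma fsigma_main {F : Set ((ℕ → Bool) × (ℕ → ℕ))} (hF : IsClosed F) :
    IsFsigma (genIdeal (A0 ∪ Bset F)) := by
  classical
  set K := closure (A0 ∪ Bset F) with hKdef
  have hKc : IsClosed K := isClosed_closure
  have hKsub : K ⊆ genIdeal (A0 ∪ Bset F) := by
    intro S hSK
    rw [hKdef, closure_union, isClosed_A0.closure_eq] at hSK
    rcases hSK with hA | hB
    · exact mem_genIdeal_of_mem (Or.inl hA)
    · rcases closure_Bset_sub hF hB with hf | hb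
      · exact finite_mem_genIdeal hf
      · exact mem_genIdeal_of_mem (Or.inr hb)
  set Cov : Finset (List Bool) × ℕ → Set (List Bool → Bool) := fun q =>
    {x | ∃ y : Fin q.2 → (List Bool → Bool),
      (∀ i, y i ∈ K) ∧ ∀ a, x a = true → a ∈ q.1 ∨ ∃ i, y i a = true} with hCov
  have hCovClosed : ∀ q, IsClosed (Cov q) := fun q => isClosed_coverSet K hKc q.1 q.2
  have hUnion : genIdeal (A0 ∪ Bset F) = ⋃ q, Cov q := by
    apply Set.Subset.antisymm
    · rintro x ⟨t, ht, s, hs, hcov⟩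
      refine Set.mem_iUnion.mpr ⟨(ht.toFinset, s.card), ?_⟩
      refine ⟨fun i => (s.equivFin.symm i : List Bool → Bool),
        fun i => subset_closure (hs (s.equivFin.symm i).2), ?_⟩
      intro a ha
      rcases hcov a ha with h | ⟨y, hy, hya⟩
      · exact Or.inl (ht.mem_toFinset.mpr h)
      · refine Or.inr ⟨s.equivFin ⟨y, hy⟩, ?_⟩
        show ((s.equivFin.symm (s.equivFin ⟨y, hy⟩) : s) : List Bool → Bool) a = true
        rw [Equiv.symm_apply_apply]
        exact hya
    · intro x hx
      obtain ⟨q, hq⟩ := Set.mem_iUnion.mp hx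
      obtain ⟨y, hyK, hcov⟩ := hq
      apply genIdeal_trans hKsub
      refine ⟨↑q.1, q.1.finite_toSet, Finset.univ.image y, ?_, ?_⟩
      · intro z hz
        simp only [Finset.coe_image, Finset.coe_univ, Set.image_univ, Set.mem_range] at hz
        obtain ⟨i, rfl⟩ := hz
        exact hyK i
      · intro a ha
        rcases hcov a ha with h | ⟨i, h⟩
        · exact Or.inl h
        · exact Or.inr ⟨y i, Finset.mem_image_of_mem y (Finset.mem_univ i), h⟩
  refine ⟨fun n => (Encodable.decode (α := Finset (List Bool) × ℕ) n).elim ∅ Cov, ?_, ?_⟩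
  · intro n
    rcases h : Encodable.decode (α := Finset (List Bool) × ℕ) n with _ | q
    · simp [h, isClosed_empty]
    · simp only [h, Option.elim]
      exact hCovClosed q
  · rw [hUnion]
    ext x
    simp only [Set.mem_iUnion]
    constructor
    · rintro ⟨q, hq⟩
      exact ⟨Encodable.encode q, by rw [Encodable.encodek]; exact hq⟩
    · rintro ⟨n, hn⟩
      rcases h : Encodable.decode (α := Finset (List Bool) × ℕ) n with _ | q
      · rw [h] at hn; simp at hn
      · rw [h] at hn; exact ⟨q, hn⟩

end AuxTallFsigma

/-- For a closed `F ⊆ 2^ω × ω^ω` projecting onto `2^ω`, the ideal on `2^{<ω}` generated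
by `A₀ ∪ B` is a tall `F_σ` ideal. -/
theorem genIdeal_antichains_Bset_tall_Fsigma
    (F : Set ((ℕ → Bool) × (ℕ → ℕ))) (hF : IsClosed F)
    (hproj : ∀ f : ℕ → Bool, ∃ g : ℕ → ℕ, (f, g) ∈ F) :
    IsIdealOn (genIdeal (A0 ∪ Bset F)) ∧ IsTall (genIdeal (A0 ∪ Bset F)) ∧
      IsFsigma (genIdeal (A0 ∪ Bset F)) := by
  refine ⟨⟨fun x y hx hy => genIdeal_union hx hy,
    fun x y hy hxy => genIdeal_downward hy hxy,
    fun x hx => finite_mem_genIdeal hx,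
    top_not_mem F⟩, tall_main F hproj, fsigma_main hF⟩
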